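/- Let a = (a₁,a₂,a₃,a₄) ∈ (ℤ∖{0})⁴ with the aᵢ not all of the same sign, and let δ = (minᵢ|aᵢ|)/(maxᵢ|aᵢ|). Then 𝔍_a(B) ≫ δ³·min{αδ, 1}, where α = log B and the implied constant is independent of a and B. -/

import Mathlib

open Filter MeasureTheory Finset Topology
open scoped ENNReal

noncomputable section

/-- Euclidean norm of an integer quadruple. -/
def znorm (a : Fin 4 → ℤ) : ℝ := Real.sqrt (∑ i, ((a i : ℝ)) ^ 2)

/-- Euclidean norm of a natural-number quadruple. -/
def pnorm (x : Fin 4 → ℕ) : ℝ := Real.sqrt (∑ i, ((x i : ℝ)) ^ 2)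

/-- Sup-norm `|a| = maxᵢ |aᵢ|` of an integer quadruple. -/
def snorm (a : Fin 4 → ℤ) : ℕ := Finset.univ.sup fun i => (a i).natAbs

/-- Min of the absolute values of the coordinates. -/
def minAbs (a : Fin 4 → ℤ) : ℕ := Finset.univ.inf' Finset.univ_nonempty fun i => (a i).natAbs

/-- `a` is primitive: all coordinates nonzero and gcd of the coordinates is 1. -/
def IsPrimitive (a : Fin 4 → ℤ) : Prop := (∀ i, a i ≠ 0) ∧ Finset.univ.gcd a = 1

/-- `a` is locally solvable: it is primitive, its coordinates are not all of the same
sign, and for every prime `p` the congruence `⟨a,x⟩ ≡ 0 (mod p)` has a solution in the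
reduced residues mod `p`. -/
def IsLocSolv (a : Fin 4 → ℤ) : Prop :=
  IsPrimitive a ∧ ¬ ((∀ i, 0 < a i) ∨ (∀ i, a i < 0)) ∧
  ∀ p : ℕ, p.Prime → ∃ x : Fin 4 → (ZMod p)ˣ,
    ∑ i, (a i : ZMod p) * ((x i : (ZMod p)ˣ) : ZMod p) = 0

/-- The set `L(a)` of quadruples of primes solving `⟨a,p⟩ = 0`. -/
def Lsol (a : Fin 4 → ℤ) : Set (Fin 4 → ℕ) :=
  {p | (∀ i, (p i).Prime) ∧ ∑ i, a i * (p i : ℤ) = 0}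

/-- `𝔪(a)`: the minimum of `|p|` over prime solutions `p ∈ L(a)`, and `∞` if there is
no solution. -/
def mfrak (a : Fin 4 → ℤ) : ℝ≥0∞ :=
  ⨅ p ∈ Lsol a, ((Finset.univ.sup p : ℕ) : ℝ≥0∞)

/-- The condition `𝔪(a)³ ≤ |a|·(log |a|)⁴·(log log |a|)`. -/
def SmallSol (a : Fin 4 → ℤ) : Prop :=
  (mfrak a) ^ 3 ≤ ENNReal.ofReal ((snorm a : ℝ) * (Real.log (snorm a)) ^ 4 *
    Real.log (Real.log (snorm a)))

/-- `𝕃^loc(A)`. -/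
def LlocSet (A : ℝ) : Set (Fin 4 → ℤ) := {a | IsLocSolv a ∧ znorm a ≤ A}

/-- `𝕃(A)`. -/
def LSet (A : ℝ) : Set (Fin 4 → ℤ) := {a | IsPrimitive a ∧ znorm a ≤ A}

/-- `𝒫(B)`: quadruples of primes of sup-norm at most `B`. -/
def PP (B : ℝ) : Set (Fin 4 → ℕ) := {x | ∀ i, (x i).Prime ∧ (x i : ℝ) ≤ B}

/-- The counting function `N_a(B)`. -/
def NB (a : Fin 4 → ℤ) (B : ℝ) : ℝ :=
  (Real.log B) ^ 4 * (Set.ncard {x | x ∈ PP B ∧ ∑ i, a i * (x i : ℤ) = 0} : ℝ)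

/-- `w = log log B / log log log B`. -/
def wB (B : ℝ) : ℝ := Real.log (Real.log B) / Real.log (Real.log (Real.log B))

/-- `W = ∏_{p ≤ w} p^(⌈log w/log p⌉ + 1)`. -/
def WB (B : ℝ) : ℕ :=
  ∏ p ∈ Finset.filter Nat.Prime (Finset.range (⌊wB B⌋₊ + 1)),
    p ^ (⌈Real.log (wB B) / Real.log (p : ℝ)⌉₊ + 1)

/-- `rad(W) = ∏_{p ≤ w} p`. -/
def radWB (B : ℝ) : ℕ :=
  ∏ p ∈ Finset.filter Nat.Prime (Finset.range (⌊wB B⌋₊ + 1)), p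

/-- The local counting function `N_a^loc(B)`; the summation condition is
`a ∈ Λ_x^(W) ∩ 𝒞_x^(α)` with `α = log B`. -/
def NlocB (a : Fin 4 → ℤ) (B : ℝ) : ℝ :=
  (Real.log B) ^ 4 * (Real.log B * (WB B : ℝ) / znorm a) *
    ∑ᶠ x ∈ {x : Fin 4 → ℕ | x ∈ PP B ∧ ((WB B : ℤ) ∣ ∑ i, a i * (x i : ℤ)) ∧
      |∑ i, (x i : ℝ) * (a i : ℝ)| ≤ pnorm x * znorm a / (2 * Real.log B)},
      1 / pnorm x

/-- Gram determinant `‖u‖²‖v‖² − ⟨u,v⟩²` of a pair of real vectors. -/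
def gram2 (u v : Fin 4 → ℝ) : ℝ :=
  (∑ i, u i ^ 2) * (∑ i, v i ^ 2) - (∑ i, u i * v i) ^ 2

/-- Determinant of a rank-2 lattice `S ⊆ ℤ⁴`: for such a lattice it is the minimum of
`det(ℤu ⊕ ℤv) = √(‖u‖²‖v‖² − ⟨u,v⟩²)` over linearly independent pairs `u, v ∈ S`
(the minimum being attained precisely at bases of `S`). -/
def latDet2 (S : Set (Fin 4 → ℤ)) : ℝ :=
  sInf {d : ℝ | ∃ u ∈ S, ∃ v ∈ S,
    (∀ m n : ℤ, m • u + n • v = 0 → m = 0 ∧ n = 0) ∧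
    d = Real.sqrt (gram2 (fun i => (u i : ℝ)) (fun i => (v i : ℝ)))}

/-- `det(Λ_x ∩ Λ_y)` for quadruples of primes `x, y`. -/
def detXY (x y : Fin 4 → ℕ) : ℝ :=
  latDet2 {z | (∑ i, (x i : ℤ) * z i) = 0 ∧ (∑ i, (y i : ℤ) * z i) = 0}

/-- `Ω(B)`: pairs of distinct quadruples of primes of size at most `B`. -/
def OmegaB (B : ℝ) : Set ((Fin 4 → ℕ) × (Fin 4 → ℕ)) :=
  {p | p.1 ∈ PP B ∧ p.2 ∈ PP B ∧ p.1 ≠ p.2}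

/-- `E(B)`. -/
def EB (B : ℝ) : ℝ :=
  (Real.log B) ^ 8 * ∑ᶠ p ∈ OmegaB B, 1 / detXY p.1 p.2

/-- `𝒢(x,y)`: the gcd of the 2×2 minors of the matrix with columns `x, y`. -/
def Gcal (x y : Fin 4 → ℕ) : ℤ :=
  Finset.univ.gcd fun q : Fin 4 × Fin 4 =>
    (x q.1 : ℤ) * (y q.2 : ℤ) - (x q.2 : ℤ) * (y q.1 : ℤ)

/-- `Δ(x,y) = ‖x‖‖y‖/det(ℤx ⊕ ℤy)`. -/
def DeltaXY (x y : Fin 4 → ℕ) : ℝ :=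
  pnorm x * pnorm y / Real.sqrt (gram2 (fun i => (x i : ℝ)) (fun i => (y i : ℝ)))

/-- `ℰ_{x,y}(B) = min{1, Δ(x,y)²/α²} + 𝟏[𝒢(x,y) ∤ W/rad(W)]`. -/
def EcalXY (x y : Fin 4 → ℕ) (B : ℝ) : ℝ :=
  min 1 (DeltaXY x y ^ 2 / (Real.log B) ^ 2) +
  (if Gcal x y ∣ ((WB B / radWB B : ℕ) : ℤ) then 0 else 1)

/-- `F(B)`. -/
def FB (B : ℝ) : ℝ :=
  (Real.log B) ^ 8 * ∑ᶠ p ∈ OmegaB B, EcalXY p.1 p.2 B / detXY p.1 p.2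

/-- `ζ(2)`. -/
def zeta2 : ℝ := ∑' n : ℕ, (1 : ℝ) / (n + 1) ^ 2

/-- `{a ∈ ℤ⁴_prim : ‖a‖ ≤ A}` with `ℤ⁴_prim` the tuples of coprime coordinates. -/
def primA (A : ℝ) : Set (Fin 4 → ℤ) := {a | Finset.univ.gcd a = 1 ∧ znorm a ≤ A}

/-- `D(A,B)`. -/
def DAB (A B : ℝ) : ℝ :=
  (∑ᶠ a ∈ primA A, NB a B ^ 2) - (Real.log B) ^ 4 * ∑ᶠ a ∈ primA A, NB a B

/-- `Δ_a^mix(B)`. -/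
def DeltaMix (a : Fin 4 → ℤ) (B : ℝ) : ℝ :=
  (Real.log B) ^ 8 * (Real.log B * (WB B : ℝ) / znorm a) *
    ∑ᶠ x ∈ {x : Fin 4 → ℕ | x ∈ PP B ∧ ∑ i, a i * (x i : ℤ) = 0}, 1 / pnorm x

/-- `Δ_a^loc(B)`. -/
def DeltaLoc (a : Fin 4 → ℤ) (B : ℝ) : ℝ :=
  (Real.log B) ^ 8 * ((Real.log B) ^ 2 * (WB B : ℝ) ^ 2 / znorm a ^ 2) *
    ∑ᶠ x ∈ {x : Fin 4 → ℕ | x ∈ PP B ∧ ((WB B : ℤ) ∣ ∑ i, a i * (x i : ℤ)) ∧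
      |∑ i, (x i : ℝ) * (a i : ℝ)| ≤ pnorm x * znorm a / (2 * Real.log B)},
      1 / pnorm x ^ 2

/-- `D^mix(A,B)`. -/
def DmixAB (A B : ℝ) : ℝ :=
  (∑ᶠ a ∈ primA A, NB a B * NlocB a B) - ∑ᶠ a ∈ primA A, DeltaMix a B

/-- `D^loc(A,B)`. -/
def DlocAB (A B : ℝ) : ℝ :=
  (∑ᶠ a ∈ primA A, NlocB a B ^ 2) - ∑ᶠ a ∈ primA A, DeltaLoc a B

/-- `K(A,B)`. -/
def KAB (A B : ℝ) : ℝ :=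
  ∑ᶠ a ∈ primA A, ((Real.log B) ^ 4 * NB a B + DeltaMix a B + DeltaLoc a B)

/-- `τ(a,γ) = γ·vol({u ∈ 𝓑₄(1) ∩ ℝ⁴₊ : a ∈ 𝒞_u^(γ)})`. -/
def tauA (a : Fin 4 → ℤ) (γ : ℝ) : ℝ :=
  γ * (volume {u : Fin 4 → ℝ | Real.sqrt (∑ i, u i ^ 2) < 1 ∧ (∀ i, 0 < u i) ∧
      |∑ i, u i * (a i : ℝ)| ≤ Real.sqrt (∑ i, u i ^ 2) * znorm a / (2 * γ)}).toReal

/-- The singular integral `𝔍_a(B) = τ(a, log B)`. -/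
def Jfrak (a : Fin 4 → ℤ) (B : ℝ) : ℝ := tauA a (Real.log B)

/-- `σ(a,Q) = (Q/φ(Q)⁴)·#{b ∈ ((ℤ/Qℤ)^*)⁴ : ⟨a,b⟩ ≡ 0 mod Q}`. -/
def sigmaA (a : Fin 4 → ℤ) (Q : ℕ) : ℝ :=
  (Q : ℝ) / (Nat.totient Q : ℝ) ^ 4 *
    (Nat.card {b : Fin 4 → (ZMod Q)ˣ |
      ∑ i, (a i : ZMod Q) * ((b i : (ZMod Q)ˣ) : ZMod Q) = 0} : ℝ)

/-- The truncated singular series `𝔖_a(B) = σ(a, W)`. -/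
def Sfrak (a : Fin 4 → ℤ) (B : ℝ) : ℝ := sigmaA a (WB B)

end

section AuxSingular

open MeasureTheory Matrix

private lemma aux_det (a : Fin 4 → ℤ) (k : Fin 4) :
    LinearMap.det (Matrix.toLin'
      ((1 : Matrix (Fin 4) (Fin 4) ℝ).updateRow k fun j => (a j : ℝ))) = (a k : ℝ) := by
  rw [LinearMap.det_toLin']
  have h1 : (1 : Matrix (Fin 4) (Fin 4) ℝ).updateRow k (fun j => (a j : ℝ))
      = ((1 : Matrix (Fin 4) (Fin 4) ℝ).updateCol k fun j => (a j : ℝ))ᵀ := by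
    rw [← Matrix.updateRow_transpose, Matrix.transpose_one]
  rw [h1, Matrix.det_transpose, ← Matrix.cramer_apply, Matrix.cramer_one]
  rfl

private lemma neg_minAbs (a : Fin 4 → ℤ) : minAbs (-a) = minAbs a := by
  have h : (fun i => ((-a) i).natAbs) = fun i => (a i).natAbs := by
    funext i; simp
  unfold minAbs
  rw [h]

private lemma neg_snorm (a : Fin 4 → ℤ) : _root_.snorm (-a) = _root_.snorm a := by
  have h : (fun i => ((-a) i).natAbs) = fun i => (a i).natAbs := by
    funext i; simp
  unfold _root_.snorm
  rw [h]

private lemma neg_Jfrak (a : Fin 4 → ℤ) (B : ℝ) : Jfrak (-a) B = Jfrak a B := by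
  have hz : znorm (-a) = znorm a := by
    unfold znorm
    congr 1
    refine Finset.sum_congr rfl fun i _ => ?_
    simp
  unfold Jfrak tauA
  rw [hz]
  congr 3
  ext u
  simp only [Set.mem_setOf_eq]
  have hneg : ∑ i, u i * ((-a) i : ℝ) = -∑ i, u i * (a i : ℝ) := by
    rw [← Finset.sum_neg_distrib]
    refine Finset.sum_congr rfl fun i _ => ?_
    simp only [Pi.neg_apply, Int.cast_neg]
    ring
  rw [hneg, abs_neg]

set_option maxHeartbeats 2000000 in
private lemma aux_main (B : ℝ) (hB : 3 ≤ B) (a : Fin 4 → ℤ) (ha : ∀ i, a i ≠ 0)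
    (i0 k : Fin 4) (hik : i0 ≠ k) (hpos : 0 < a i0) (hmin : (a i0).natAbs = minAbs a)
    (hneg : a k < 0) :
    (1/262144 : ℝ) * ((minAbs a : ℝ) / (_root_.snorm a : ℝ)) ^ 3 *
      min (Real.log B * ((minAbs a : ℝ) / (_root_.snorm a : ℝ))) 1 ≤ Jfrak a B := by
  have hα : 0 < Real.log B := Real.log_pos (by linarith)
  set α : ℝ := Real.log B with hα_def
  set M : ℝ := (_root_.snorm a : ℝ) with hM_def
  set m : ℝ := (minAbs a : ℝ) with hm_def
  have habs : ∀ i, ((a i).natAbs : ℝ) = |(a i : ℝ)| := fun i => by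
    rw [Nat.cast_natAbs, Int.cast_abs]
  have hmle : ∀ i, m ≤ |(a i : ℝ)| := by
    intro i
    rw [← habs, hm_def]
    exact_mod_cast Finset.inf'_le _ (Finset.mem_univ i)
  have hMge : ∀ i, |(a i : ℝ)| ≤ M := by
    intro i
    rw [← habs, hM_def]
    exact_mod_cast Finset.le_sup (f := fun i => (a i).natAbs) (Finset.mem_univ i)
  have hm1 : (1 : ℝ) ≤ m := by
    rw [hm_def]
    have : 1 ≤ minAbs a :=
      Finset.le_inf' _ _ (fun i _ => Nat.one_le_iff_ne_zero.mpr
        (Int.natAbs_ne_zero.mpr (ha i)))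
    exact_mod_cast this
  have hm0 : 0 < m := by linarith
  have hmM : m ≤ M := (hmle i0).trans (hMge i0)
  have hM0 : 0 < M := by linarith
  have hαne : α ≠ 0 := hα.ne'
  have hMne : M ≠ 0 := hM0.ne'
  have hai0 : (a i0 : ℝ) = m := by
    rw [hm_def, ← hmin, habs i0, abs_of_pos (by exact_mod_cast hpos)]
  have hzn : M ≤ znorm a := by
    obtain ⟨j, -, hj⟩ := Finset.exists_mem_eq_sup Finset.univ Finset.univ_nonempty
      (fun i => (a i).natAbs)
    have hj' : _root_.snorm a = (a j).natAbs := hj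
    have hMj : M = |(a j : ℝ)| := by rw [hM_def, hj', habs j]
    rw [hMj]
    calc |(a j : ℝ)| = Real.sqrt ((a j : ℝ) ^ 2) := (Real.sqrt_sq_eq_abs _).symm
      _ ≤ znorm a := Real.sqrt_le_sqrt
          (Finset.single_le_sum (fun i _ => sq_nonneg ((a i : ℝ))) (Finset.mem_univ j))
  set h : ℝ := min (M / (8 * α)) (m / 32) with hh_def
  have hh0 : 0 < h := lt_min (by positivity) (by positivity)
  have hhm : h ≤ m / 32 := min_le_right _ _
  have hhM : h ≤ M / (8 * α) := min_le_left _ _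
  -- the box
  set lo : Fin 4 → ℝ := fun i =>
    if i = i0 then 1/4 else if i = k then -h else m / (64 * |(a i : ℝ)|) with hlo_def
  set hi : Fin 4 → ℝ := fun i =>
    if i = i0 then 1/2 else if i = k then h else m / (32 * |(a i : ℝ)|) with hhi_def
  have hlo_i0 : lo i0 = 1/4 := by simp [hlo_def]
  have hhi_i0 : hi i0 = 1/2 := by simp [hhi_def]
  have hlo_k : lo k = -h := by simp [hlo_def, Ne.symm hik]
  have hhi_k : hi k = h := by simp [hhi_def, Ne.symm hik]
  have hlo_o : ∀ i, i ≠ i0 → i ≠ k → lo i = m / (64 * |(a i : ℝ)|) := by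
    intro i h1 h2; simp [hlo_def, h1, h2]
  have hhi_o : ∀ i, i ≠ i0 → i ≠ k → hi i = m / (32 * |(a i : ℝ)|) := by
    intro i h1 h2; simp [hhi_def, h1, h2]
  have haipos : ∀ i, (0:ℝ) < |(a i : ℝ)| := fun i => lt_of_lt_of_le hm0 (hmle i)
  have hw_o : ∀ i, i ≠ i0 → i ≠ k → hi i - lo i = m / (64 * |(a i : ℝ)|) := by
    intro i h1 h2
    rw [hlo_o i h1 h2, hhi_o i h1 h2]
    have h3 : |(a i : ℝ)| ≠ 0 := (haipos i).ne'
    field_simp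
    ring
  have hwidth : ∀ i, 0 ≤ hi i - lo i := by
    intro i
    by_cases h1 : i = i0
    · subst h1; rw [hlo_i0, hhi_i0]; norm_num
    by_cases h2 : i = k
    · subst h2; rw [hlo_k, hhi_k]; linarith
    · rw [hw_o i h1 h2]
      have := haipos i
      positivity
  -- the linear map
  set f := Matrix.toLin' ((1 : Matrix (Fin 4) (Fin 4) ℝ).updateRow k fun j => (a j : ℝ))
    with hf_def
  have hfk : ∀ u : Fin 4 → ℝ, f u k = ∑ j, (a j : ℝ) * u j := by
    intro u
    show Matrix.mulVec _ u k = _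
    simp [Matrix.mulVec, dotProduct, Matrix.updateRow_self]
  have hfne : ∀ (u : Fin 4 → ℝ) i, i ≠ k → f u i = u i := by
    intro u i hi'
    show Matrix.mulVec _ u i = _
    simp [Matrix.mulVec, dotProduct, Matrix.updateRow_ne hi', Matrix.one_apply,
      ite_mul, Finset.sum_ite_eq]
  set T : Set (Fin 4 → ℝ) := {u : Fin 4 → ℝ | Real.sqrt (∑ i, u i ^ 2) < 1 ∧ (∀ i, 0 < u i) ∧
      |∑ i, u i * (a i : ℝ)| ≤ Real.sqrt (∑ i, u i ^ 2) * znorm a / (2 * α)} with hT_def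
  set S : Set (Fin 4 → ℝ) := f ⁻¹' (Set.pi Set.univ fun i => Set.Ioo (lo i) (hi i)) with hS_def
  -- S ⊆ T
  have hsub : S ⊆ T := by
    intro u hu
    rw [hS_def, Set.mem_preimage, Set.mem_univ_pi] at hu
    rw [hT_def, Set.mem_setOf_eq]
    have hu_i0 : 1/4 < u i0 ∧ u i0 < 1/2 := by
      have := hu i0; rw [hfne u i0 hik, hlo_i0, hhi_i0] at this; exact this
    have hu_o : ∀ i, i ≠ i0 → i ≠ k →
        m / (64 * |(a i : ℝ)|) < u i ∧ u i < m / (32 * |(a i : ℝ)|) := by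
      intro i h1 h2
      have := hu i; rw [hfne u i h2, hlo_o i h1 h2, hhi_o i h1 h2] at this; exact this
    have hu_o_pos : ∀ i, i ≠ i0 → i ≠ k → 0 < u i := by
      intro i h1 h2
      refine lt_trans ?_ (hu_o i h1 h2).1
      have := haipos i; positivity
    have hu_o_lt : ∀ i, i ≠ i0 → i ≠ k → u i ≤ 1/32 := by
      intro i h1 h2
      refine le_trans (hu_o i h1 h2).2.le ?_
      rw [div_le_div_iff₀ (by have := haipos i; positivity) (by norm_num)]
      have := hmle i
      nlinarith [haipos i]
    set D : ℝ := ∑ j, (a j : ℝ) * u j with hD_def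
    have hDh : |D| < h := by
      have := hu k; rw [hfk u, hlo_k, hhi_k] at this
      rw [abs_lt]; exact ⟨this.1, this.2⟩
    set R : ℝ := ∑ j ∈ (Finset.univ.erase k).erase i0, (a j : ℝ) * u j with hR_def
    have hsplit : D = (a k : ℝ) * u k + (m * u i0 + R) := by
      rw [hD_def, ← Finset.add_sum_erase Finset.univ _ (Finset.mem_univ k),
        ← Finset.add_sum_erase _ _ (Finset.mem_erase.mpr ⟨hik, Finset.mem_univ i0⟩), hai0]
    have hRb : |R| ≤ m / 8 := by
      have hterm : ∀ j ∈ (Finset.univ.erase k).erase i0, |(a j : ℝ) * u j| ≤ m / 32 := by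
        intro j hj
        rw [Finset.mem_erase, Finset.mem_erase] at hj
        obtain ⟨hj1, hj2, -⟩ := hj
        rw [abs_mul, abs_of_pos (hu_o_pos j hj1 hj2)]
        have h2 := (hu_o j hj1 hj2).2
        have h3 := haipos j
        calc |(a j : ℝ)| * u j ≤ |(a j : ℝ)| * (m / (32 * |(a j : ℝ)|)) :=
              mul_le_mul_of_nonneg_left h2.le h3.le
          _ = m / 32 := by field_simp
      calc |R| ≤ ∑ j ∈ (Finset.univ.erase k).erase i0, |(a j : ℝ) * u j| :=
            Finset.abs_sum_le_sum_abs _ _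
        _ ≤ ∑ _j ∈ (Finset.univ.erase k).erase i0, m / 32 := Finset.sum_le_sum hterm
        _ = ((Finset.univ.erase k).erase i0).card * (m / 32) := by
            rw [Finset.sum_const, nsmul_eq_mul]
        _ ≤ 4 * (m / 32) := by
            have hc4 : ((Finset.univ.erase k).erase i0).card ≤ 4 :=
              le_trans (Finset.card_le_card (Finset.subset_univ _)) (by simp)
            have h4 : (((Finset.univ.erase k).erase i0).card : ℝ) ≤ 4 := by exact_mod_cast hc4
            nlinarith [hm0]
        _ = m / 8 := by ring
    have hc0 : (0:ℝ) < -(a k : ℝ) := by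
      simp only [neg_pos]; exact_mod_cast hneg
    have hcm : m ≤ -(a k : ℝ) := by
      have := hmle k
      rw [abs_of_neg (by exact_mod_cast hneg : (a k : ℝ) < 0)] at this
      linarith
    have hcM : -(a k : ℝ) ≤ M := by
      have := hMge k
      rw [abs_of_neg (by exact_mod_cast hneg : (a k : ℝ) < 0)] at this
      linarith
    have hcu : -(a k : ℝ) * u k = m * u i0 + R - D := by linarith [hsplit]
    have hDb : -h < D ∧ D < h := abs_lt.mp hDh
    have hRb' := abs_le.mp hRb
    have hku_lb : 3 * m / 32 < -(a k : ℝ) * u k := by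
      rw [hcu]
      nlinarith [hu_i0.1, hhm, hDb.2]
    have huk_pos : 0 < u k := by
      by_contra hcon
      push_neg at hcon
      nlinarith [hku_lb, mul_nonpos_of_nonneg_of_nonpos hc0.le hcon]
    have huk_ub : u k ≤ 21/32 := by
      have hub : -(a k : ℝ) * u k < 21 * m / 32 := by
        rw [hcu]
        nlinarith [hu_i0.2, hhm, hDb.1]
      nlinarith [hcm, hc0, huk_pos]
    have hupos : ∀ i, 0 < u i := by
      intro i
      by_cases h1 : i = i0
      · subst h1; linarith [hu_i0.1]
      by_cases h2 : i = k
      · subst h2; exact huk_pos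
      · exact hu_o_pos i h1 h2
    have hsum_lt : ∑ i, u i ^ 2 < 1 := by
      have hsplit2 : ∑ i, u i ^ 2
          = u k ^ 2 + (u i0 ^ 2 + ∑ j ∈ (Finset.univ.erase k).erase i0, u j ^ 2) := by
        rw [← Finset.add_sum_erase Finset.univ _ (Finset.mem_univ k),
          ← Finset.add_sum_erase _ _ (Finset.mem_erase.mpr ⟨hik, Finset.mem_univ i0⟩)]
      have hE2 : ∑ j ∈ (Finset.univ.erase k).erase i0, u j ^ 2 ≤ 4 * (1/32:ℝ)^2 := by
        calc ∑ j ∈ (Finset.univ.erase k).erase i0, u j ^ 2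
            ≤ ∑ _j ∈ (Finset.univ.erase k).erase i0, (1/32:ℝ)^2 := by
              refine Finset.sum_le_sum ?_
              intro j hj
              rw [Finset.mem_erase, Finset.mem_erase] at hj
              obtain ⟨hj1, hj2, -⟩ := hj
              have h5 := hu_o_lt j hj1 hj2
              have h6 := hu_o_pos j hj1 hj2
              nlinarith
          _ = ((Finset.univ.erase k).erase i0).card * (1/32:ℝ)^2 := by
              rw [Finset.sum_const, nsmul_eq_mul]
          _ ≤ 4 * (1/32:ℝ)^2 := by
              have hc4 : ((Finset.univ.erase k).erase i0).card ≤ 4 :=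
                le_trans (Finset.card_le_card (Finset.subset_univ _)) (by simp)
              have h4 : (((Finset.univ.erase k).erase i0).card : ℝ) ≤ 4 := by exact_mod_cast hc4
              nlinarith
      rw [hsplit2]
      nlinarith [hu_i0.1, hu_i0.2, huk_pos, huk_ub]
    have hsqrt_lt : Real.sqrt (∑ i, u i ^ 2) < 1 := by
      have h9 := Real.sqrt_lt_sqrt (Finset.sum_nonneg fun i _ => sq_nonneg (u i)) hsum_lt
      rwa [Real.sqrt_one] at h9
    have hsqrt_ge : 1/4 ≤ Real.sqrt (∑ i, u i ^ 2) := by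
      have h1 : u i0 ≤ Real.sqrt (∑ i, u i ^ 2) := by
        rw [← Real.sqrt_sq (hupos i0).le]
        exact Real.sqrt_le_sqrt
          (Finset.single_le_sum (fun i _ => sq_nonneg (u i)) (Finset.mem_univ i0))
      linarith [hu_i0.1]
    refine ⟨hsqrt_lt, hupos, ?_⟩
    have hcomm : ∑ i, u i * (a i : ℝ) = D := by
      rw [hD_def]; exact Finset.sum_congr rfl fun i _ => mul_comm _ _
    rw [hcomm]
    have hRHS : M / (8 * α) ≤ Real.sqrt (∑ i, u i ^ 2) * znorm a / (2 * α) := by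
      rw [div_le_div_iff₀ (by positivity) (by positivity)]
      have hzn0 : 0 ≤ znorm a := le_trans hM0.le hzn
      nlinarith [mul_le_mul hsqrt_ge hzn hM0.le (le_trans (by norm_num) hsqrt_ge)]
    calc |D| ≤ h := hDh.le
      _ ≤ M / (8 * α) := hhM
      _ ≤ _ := hRHS
  -- volume of S
  have hak0 : (a k : ℝ) ≠ 0 := by exact_mod_cast ha k
  have hvolS : volume S = ENNReal.ofReal (|(a k : ℝ)|⁻¹ * ∏ i, (hi i - lo i)) := by
    rw [hS_def, hf_def, MeasureTheory.Measure.addHaar_preimage_linearMap volume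
      (by rw [aux_det]; exact hak0), volume_pi_pi]
    rw [aux_det, abs_inv]
    rw [ENNReal.ofReal_mul (by positivity)]
    congr 1
    calc ∏ i, volume (Set.Ioo (lo i) (hi i)) = ∏ i, ENNReal.ofReal (hi i - lo i) :=
          Finset.prod_congr rfl fun i _ => Real.volume_Ioo
      _ = ENNReal.ofReal (∏ i, (hi i - lo i)) :=
          (ENNReal.ofReal_prod_of_nonneg (fun i _ => hwidth i)).symm
  -- T has finite volume
  have hTfin : volume T ≤ 1 := by
    have hsub2 : T ⊆ Set.pi Set.univ fun _ => Set.Ioo (0:ℝ) 1 := by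
      intro u hu
      rw [hT_def, Set.mem_setOf_eq] at hu
      rw [Set.mem_univ_pi]
      intro i
      refine ⟨hu.2.1 i, ?_⟩
      have h1 : u i ≤ Real.sqrt (∑ j, u j ^ 2) := by
        rw [← Real.sqrt_sq (hu.2.1 i).le]
        exact Real.sqrt_le_sqrt
          (Finset.single_le_sum (fun j _ => sq_nonneg (u j)) (Finset.mem_univ i))
      exact lt_of_le_of_lt h1 hu.1
    calc volume T ≤ volume (Set.pi Set.univ fun _ : Fin 4 => Set.Ioo (0:ℝ) 1) :=
          measure_mono hsub2
      _ = 1 := by simp [volume_pi_pi, Real.volume_Ioo]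
  have hTne : volume T ≠ ⊤ := ne_top_of_le_ne_top ENNReal.one_ne_top hTfin
  have hkey : |(a k : ℝ)|⁻¹ * ∏ i, (hi i - lo i) ≤ (volume T).toReal := by
    refine (ENNReal.ofReal_le_iff_le_toReal hTne).mp ?_
    rw [← hvolS]
    exact measure_mono hsub
  -- the product lower bound
  have hprod : 2 * h * ((1/4) * (m / M / 64) ^ 2) ≤ ∏ i, (hi i - lo i) := by
    rw [← Finset.mul_prod_erase Finset.univ _ (Finset.mem_univ k),
      ← Finset.mul_prod_erase _ _ (Finset.mem_erase.mpr ⟨hik, Finset.mem_univ i0⟩)]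
    have e1 : hi k - lo k = 2 * h := by rw [hlo_k, hhi_k]; ring
    have e2 : hi i0 - lo i0 = 1/4 := by rw [hlo_i0, hhi_i0]; norm_num
    rw [e1, e2]
    have hcard : ((Finset.univ.erase k).erase i0).card = 2 := by
      rw [Finset.card_erase_of_mem (Finset.mem_erase.mpr ⟨hik, Finset.mem_univ i0⟩),
        Finset.card_erase_of_mem (Finset.mem_univ k)]
      simp
    have hrest : (m / M / 64) ^ 2 ≤ ∏ j ∈ (Finset.univ.erase k).erase i0, (hi j - lo j) := by
      calc (m / M / 64) ^ 2 = ∏ _j ∈ (Finset.univ.erase k).erase i0, (m / M / 64) := by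
            rw [Finset.prod_const, hcard]
        _ ≤ _ := by
            refine Finset.prod_le_prod (fun j _ => by positivity) ?_
            intro j hj
            rw [Finset.mem_erase, Finset.mem_erase] at hj
            obtain ⟨hj1, hj2, -⟩ := hj
            rw [hw_o j hj1 hj2]
            have h3 := haipos j
            have h4 := hMge j
            rw [div_le_div_iff₀ (by positivity) (by positivity)]
            nlinarith [mul_le_mul_of_nonneg_left h4 (by positivity : (0:ℝ) ≤ m / M),
              div_mul_cancel₀ m hMne]
    have h2h : (0:ℝ) ≤ 2 * h := by linarith
    calc 2 * h * ((1/4) * (m / M / 64) ^ 2)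
        ≤ 2 * h * ((1/4) * ∏ j ∈ (Finset.univ.erase k).erase i0, (hi j - lo j)) := by
          nlinarith [hrest, hh0]
      _ = _ := by ring
  have hak_inv : M⁻¹ ≤ |(a k : ℝ)|⁻¹ := by
    have h1 := haipos k
    have h2 := hMge k
    rw [inv_le_inv₀ hM0 h1] at *
    · exact h2
  -- final assembly
  have hJ : Jfrak a B = α * (volume T).toReal := by
    rw [hT_def, hα_def]
    rfl
  rw [hJ]
  have hmin32 : min (α * (m / M)) 1 ≤ 32 * (α * h / M) := by
    rcases le_total (M / (8 * α)) (m / 32) with hle | hle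
    · have he : h = M / (8 * α) := min_eq_left hle
      rw [he]
      have he2 : 32 * (α * (M / (8 * α)) / M) = 4 := by field_simp; ring
      rw [he2]
      exact le_trans (min_le_right _ _) (by norm_num)
    · have he : h = m / 32 := min_eq_right hle
      rw [he]
      have he2 : 32 * (α * (m / 32) / M) = α * (m / M) := by field_simp
      rw [he2]
      exact min_le_left _ _
  have hδ0 : 0 < m / M := by positivity
  have hδ1 : m / M ≤ 1 := (div_le_one hM0).mpr hmM
  have step1 : (1/262144 : ℝ) * (m / M) ^ 3 * min (α * (m / M)) 1
      ≤ (1/262144 : ℝ) * (m / M) ^ 2 * (32 * (α * h / M)) := by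
    have h3 : (m / M) ^ 3 ≤ (m / M) ^ 2 := by nlinarith [hδ0, hδ1]
    have hmin0 : 0 ≤ min (α * (m / M)) 1 := le_min (by positivity) (by norm_num)
    nlinarith [mul_le_mul h3 hmin32 hmin0 (by positivity : (0:ℝ) ≤ (m/M)^2)]
  have step2 : (1/262144 : ℝ) * (m / M) ^ 2 * (32 * (α * h / M))
      ≤ α * ((volume T).toReal) := by
    have hb : M⁻¹ * (2 * h * ((1/4) * (m / M / 64) ^ 2))
        ≤ |(a k : ℝ)|⁻¹ * ∏ i, (hi i - lo i) :=
      mul_le_mul hak_inv hprod (by positivity) (by positivity)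
    have heq : (1/262144 : ℝ) * (m / M) ^ 2 * (32 * (α * h / M))
        = α * (M⁻¹ * (2 * h * ((1/4) * (m / M / 64) ^ 2))) := by
      field_simp
      ring
    rw [heq]
    exact mul_le_mul_of_nonneg_left (le_trans hb hkey) hα.le
  exact le_trans step1 step2

end AuxSingular

/-- The singular integral is bounded from below:
`𝔍_a(B) ≫ δ³·min{αδ, 1}` with `α = log B`, `δ = minᵢ|aᵢ|/maxᵢ|aᵢ|`, the implied
constant being independent of `a` and `B`. -/
theorem singular_integral_lower_bound :
    ∃ c > (0 : ℝ), ∀ B : ℝ, 3 ≤ B → ∀ a : Fin 4 → ℤ,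
      (∀ i, a i ≠ 0) → ¬ ((∀ i, 0 < a i) ∨ (∀ i, a i < 0)) →
      c * ((minAbs a : ℝ) / (snorm a : ℝ)) ^ 3 *
          min (Real.log B * ((minAbs a : ℝ) / (snorm a : ℝ))) 1 ≤ Jfrak a B := by
  refine ⟨1/262144, by norm_num, fun B hB a ha hsign => ?_⟩
  push_neg at hsign
  obtain ⟨⟨p, hp⟩, ⟨q, hq⟩⟩ := hsign
  have hp' : a p < 0 := lt_of_le_of_ne hp (ha p)
  have hq' : 0 < a q := lt_of_le_of_ne hq (Ne.symm (ha q))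
  obtain ⟨i0, -, hi0⟩ := Finset.exists_mem_eq_inf' Finset.univ_nonempty
    (fun i : Fin 4 => (a i).natAbs)
  by_cases hsgn : 0 < a i0
  · have hik : i0 ≠ p := fun h => by rw [h] at hsgn; omega
    exact aux_main B hB a ha i0 p hik hsgn hi0.symm hp'
  · have hneg : a i0 < 0 := lt_of_le_of_ne (not_lt.mp hsgn) (ha i0)
    have hik : i0 ≠ q := fun h => by rw [h] at hneg; omega
    have hJ : Jfrak (-a) B = Jfrak a B := neg_Jfrak a B
    have hmin : minAbs (-a) = minAbs a := neg_minAbs a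
    have hsn : snorm (-a) = snorm a := neg_snorm a
    have := aux_main B hB (-a) (fun i => by simp [ha i]) i0 q hik
      (by simp; omega) (by rw [hmin, Pi.neg_apply, Int.natAbs_neg]; exact hi0.symm)
      (by simp; omega)
    rwa [hJ, hmin, hsn] at this
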